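/- Let (S, step, s₀) be a transition system and F ⊆ S. Suppose ρ : Fin (m+1) → S is a finite run from s₀, and suppose there are indices a < b ≤ m with ρ a = ρ b and an index l with a < l ≤ b and ρ l ∈ F. Then there exists an infinite run π from s₀ such that the set {n : ℕ | π n ∈ F} is infinite. -/

import Mathlib

/-- A finite run of length `m` of a transition system from the initial state `s₀`. -/
def TSFinRun {S : Type*} (step : S → S → Prop) (s₀ : S) (m : ℕ)
    (ρ : Fin (m + 1) → S) : Prop :=
  ρ 0 = s₀ ∧ ∀ i : Fin m, step (ρ i.castSucc) (ρ i.succ)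

/-- An infinite run of a transition system from the initial state `s₀`. -/
def TSInfRun {S : Type*} (step : S → S → Prop) (s₀ : S) (π : ℕ → S) : Prop :=
  π 0 = s₀ ∧ ∀ n : ℕ, step (π n) (π (n + 1))

/-- Lasso construction: a finite run from `s₀` that repeats a state, with a visit to
`F` strictly between the repetitions, can be pumped into an infinite run from `s₀`
visiting `F` infinitely often. -/
theorem exists_infRun_infinite_visits_of_lasso {S : Type*}
    (step : S → S → Prop) (s₀ : S) (F : Set S) {m : ℕ} (ρ : Fin (m + 1) → S)
    (hρ : TSFinRun step s₀ m ρ) (a b : Fin (m + 1)) (hab : a < b) (hrep : ρ a = ρ b)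
    (l : Fin (m + 1)) (hal : a < l) (hlb : l ≤ b) (hF : ρ l ∈ F) :
    ∃ π : ℕ → S, TSInfRun step s₀ π ∧ {n : ℕ | π n ∈ F}.Infinite := by
  obtain ⟨h0, hstep⟩ := hρ
  have hABlt : (a : ℕ) < (b : ℕ) := hab
  have hBm : (b : ℕ) ≤ m := Nat.lt_succ_iff.mp b.isLt
  have hAL : (a : ℕ) < (l : ℕ) := hal
  have hLB : (l : ℕ) ≤ (b : ℕ) := hlb
  set A := (a : ℕ)
  set B := (b : ℕ)
  set L := (l : ℕ)
  let g : ℕ → ℕ := fun p => if p < B then p + 1 else A + 1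
  let idx : ℕ → ℕ := fun n => g^[n] 0
  have idx0 : idx 0 = 0 := rfl
  have idxsucc : ∀ n : ℕ, idx (n + 1) = g (idx n) := fun n =>
    Function.iterate_succ_apply' g n 0
  have glt : ∀ p : ℕ, p < B → g p = p + 1 := by intro p h; simp only [g, if_pos h]
  have gge : ∀ p : ℕ, ¬ p < B → g p = A + 1 := by intro p h; simp only [g, if_neg h]
  have hle : ∀ n, idx n ≤ B := by
    intro n
    induction n with
    | zero => exact Nat.zero_le _
    | succ n ih =>
      rw [idxsucc]
      by_cases h : idx n < B
      · rw [glt _ h]; omega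
      · rw [gge _ h]; omega
  have hlem : ∀ n, idx n < m + 1 := fun n => Nat.lt_succ_of_le (le_trans (hle n) hBm)
  set π : ℕ → S := fun n => ρ ⟨idx n, hlem n⟩ with hπ
  have hadd : ∀ d n, idx n + d ≤ B → idx (n + d) = idx n + d := by
    intro d
    induction d with
    | zero => intro n _; rfl
    | succ d ih =>
      intro n h
      have h1 : idx (n + d) = idx n + d := ih n (by omega)
      have h2 : idx (n + d) < B := by omega
      have : idx ((n + d) + 1) = idx (n + d) + 1 := by
        rw [idxsucc, glt _ h2]
      calc idx (n + (d + 1)) = idx ((n + d) + 1) := by ring_nf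
        _ = idx (n + d) + 1 := this
        _ = idx n + (d + 1) := by omega
  have hvisit : ∀ n, ∃ k, n < k ∧ idx k = L := by
    intro n
    have h1 : idx (n + (B - idx n)) = B := by
      have := hadd (B - idx n) n (by have := hle n; omega)
      have := hle n
      omega
    set k0 := n + (B - idx n) with hk0
    have h2 : idx (k0 + 1) = A + 1 := by
      rw [idxsucc, gge _ (by omega)]
    have h3 : idx ((k0 + 1) + (L - (A + 1))) = L := by
      have := hadd (L - (A + 1)) (k0 + 1) (by omega)
      omega
    exact ⟨(k0 + 1) + (L - (A + 1)), by omega, h3⟩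
  refine ⟨π, ⟨?_, ?_⟩, ?_⟩
  · show ρ ⟨idx 0, _⟩ = s₀
    have : (⟨idx 0, hlem 0⟩ : Fin (m + 1)) = 0 := by
      ext; simp [idx0]
    rw [this]; exact h0
  · intro n
    show step (ρ ⟨idx n, _⟩) (ρ ⟨idx (n + 1), _⟩)
    by_cases h : idx n < B
    · have h1 : idx (n + 1) = idx n + 1 := by rw [idxsucc, glt _ h]
      have hm : idx n < m := lt_of_lt_of_le h hBm
      have := hstep ⟨idx n, hm⟩
      have e1 : (⟨idx n, hlem n⟩ : Fin (m + 1)) = (⟨idx n, hm⟩ : Fin m).castSucc := by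
        ext; rfl
      have e2 : (⟨idx (n + 1), hlem (n + 1)⟩ : Fin (m + 1)) = (⟨idx n, hm⟩ : Fin m).succ := by
        ext; simp [h1]
      rw [e1, e2]; exact this
    · have hB : idx n = B := le_antisymm (hle n) (by omega)
      have h1 : idx (n + 1) = A + 1 := by rw [idxsucc, gge _ h]
      have hm : A < m := lt_of_lt_of_le hABlt hBm
      have := hstep ⟨A, hm⟩
      have e1 : (⟨idx n, hlem n⟩ : Fin (m + 1)) = b := by ext; simp [hB]; rfl
      have e2 : (⟨idx (n + 1), hlem (n + 1)⟩ : Fin (m + 1)) = (⟨A, hm⟩ : Fin m).succ := by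
        ext; simp [h1]
      have e3 : (⟨A, hm⟩ : Fin m).castSucc = a := by ext; rfl
      rw [e1, e2, ← hrep, ← e3]
      exact this
  · apply Set.infinite_of_not_bddAbove
    intro hbdd
    obtain ⟨c, hc⟩ := hbdd
    obtain ⟨k, hk, hkL⟩ := hvisit c
    have hmem : k ∈ {n : ℕ | π n ∈ F} := by
      show ρ ⟨idx k, hlem k⟩ ∈ F
      have : (⟨idx k, hlem k⟩ : Fin (m + 1)) = l := by ext; simp [hkL]; rfl
      rw [this]; exact hF
    have := hc hmem
    omega
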